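/- Let k be a field of characteristic p > 0 and let f : A → B be a homomorphism of commutative k-algebras such that (1) every element of the kernel of f is nilpotent, and (2) for every b ∈ B there exists r ≥ 0 with b^{p^r} in the image of f. Then the induced map Spec B → Spec A on prime spectra is a homeomorphism. -/

import Mathlib

/-- If `f : A → B` is a homomorphism of commutative algebras over a field of
characteristic `p > 0` with nilpotent kernel and such that every `b : B` has some `p^r`-th
power in the image of `f`, then `Spec B → Spec A` is a homeomorphism. -/
theorem stmt2 {k A B : Type} [Field k] (p : ℕ) [Fact p.Prime] [CharP k p]
    [CommRing A] [Algebra k A] [CommRing B] [Algebra k B]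
    (f : A →ₐ[k] B)
    (hker : ∀ a ∈ RingHom.ker f.toRingHom, IsNilpotent a)
    (hpow : ∀ b : B, ∃ r : ℕ, b ^ (p ^ r) ∈ Set.range f) :
    ∃ h : PrimeSpectrum B ≃ₜ PrimeSpectrum A,
      (h : PrimeSpectrum B → PrimeSpectrum A) = PrimeSpectrum.comap f.toRingHom := by
  set φ := f.toRingHom with hφ
  -- φ is integral
  have hint : φ.IsIntegral := by
    intro b
    obtain ⟨r, a, ha⟩ := hpow b
    have ha' : φ a = b ^ (p ^ r) := ha
    refine ⟨Polynomial.X ^ (p ^ r) - Polynomial.C a, ?_, ?_⟩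
    · apply Polynomial.monic_X_pow_sub_C
      exact pow_ne_zero _ (Fact.out : p.Prime).ne_zero
    · simp [Polynomial.eval₂_sub, ha']
  have hclosed : IsClosedMap (PrimeSpectrum.comap φ) :=
    PrimeSpectrum.isClosedMap_comap_of_isIntegral φ hint
  -- injectivity
  have hinj : Function.Injective (PrimeSpectrum.comap φ) := by
    intro q₁ q₂ hq
    have key : ∀ q₁ q₂ : PrimeSpectrum B,
        PrimeSpectrum.comap φ q₁ = PrimeSpectrum.comap φ q₂ →
        q₁.asIdeal ≤ q₂.asIdeal := by
      intro q₁ q₂ hq b hb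
      obtain ⟨r, a, ha⟩ := hpow b
      have ha' : φ a = b ^ (p ^ r) := ha
      have h1 : a ∈ (PrimeSpectrum.comap φ q₁).asIdeal := by
        show φ a ∈ q₁.asIdeal
        rw [ha']
        exact Ideal.pow_mem_of_mem _ hb _ (pow_pos (Fact.out : p.Prime).pos r)
      rw [hq] at h1
      have h2 : b ^ (p ^ r) ∈ q₂.asIdeal := by rw [← ha']; exact h1
      exact q₂.isPrime.mem_of_pow_mem _ h2
    ext1
    exact le_antisymm (key _ _ hq) (key _ _ hq.symm)
  -- surjectivity
  have hsurj : Function.Surjective (PrimeSpectrum.comap φ) := by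
    intro P
    letI : Algebra A B := φ.toAlgebra
    have halg : algebraMap A B = φ := rfl
    haveI : Algebra.IsIntegral A B := Algebra.isIntegral_def.mpr hint
    have hkerle : RingHom.ker (algebraMap A B) ≤ P.asIdeal := by
      intro a ha
      obtain ⟨n, hn⟩ := hker a ha
      exact P.isPrime.mem_of_pow_mem n (hn ▸ P.asIdeal.zero_mem)
    have hbot : (⊥ : Ideal B).comap (algebraMap A B) ≤ P.asIdeal := by
      intro a ha
      exact hkerle ha
    haveI := P.isPrime
    obtain ⟨Q, -, hQp, hQ⟩ :=
      Ideal.exists_ideal_over_prime_of_isIntegral P.asIdeal ⊥ hbot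
    exact ⟨⟨Q, hQp⟩, PrimeSpectrum.ext hQ⟩
  have hh : IsHomeomorph (PrimeSpectrum.comap φ) :=
    isHomeomorph_iff_continuous_isClosedMap_bijective.mpr
      ⟨PrimeSpectrum.continuous_comap φ, hclosed, hinj, hsurj⟩
  exact ⟨hh.homeomorph _, rfl⟩
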